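/- Let Γ be a group acting freely on a set X (every nontrivial element acts without fixed points). For a basepoint x ∈ X define w^n_x : C^n_b(Γ↷X) → C^n_b(Γ) by w^n_x(φ)(g₀,…,g_n) = φ(g₀x,…,g_nx). Then for every n ≥ 0 and every x ∈ X, the chain map w^•_x restricts to invariant cochains and induces an isometric isomorphism H^n_b(Γ↷X) → H^n_b(Γ): a linear bijection preserving the induced sup-seminorms on cohomology. -/

import Mathlib

set_option linter.unusedSectionVars false
set_option linter.unusedVariables false

open scoped ENNReal

namespace BddCohAct

/-- Homogeneous real `n`-cochains on a set `Y`: functions `Y^{n+1} → ℝ`. -/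
abbrev Cochain (Y : Type*) (n : ℕ) : Type _ := (Fin (n + 1) → Y) → ℝ

variable (G X : Type*) [Group G] [MulAction G X]

/-- Invariance of a homogeneous cochain under the diagonal action of `G`. -/
def IsInvariant {n : ℕ} (φ : Cochain X n) : Prop :=
  ∀ (g : G) (x : Fin (n + 1) → X), φ (fun i => g • x i) = φ x

variable {G X}

/-- Boundedness of a cochain. -/
def IsBoundedC {n : ℕ} (φ : Cochain X n) : Prop :=
  ∃ C : ℝ, ∀ x, |φ x| ≤ C

/-- The sup-norm of a cochain, valued in `[0,∞]`. -/
noncomputable def snorm {n : ℕ} (φ : Cochain X n) : ℝ≥0∞ :=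
  ⨆ x : Fin (n + 1) → X, ENNReal.ofReal |φ x|

/-- The homogeneous differential. -/
noncomputable def delta {n : ℕ} : Cochain X n →ₗ[ℝ] Cochain X (n + 1) where
  toFun φ := fun x => ∑ i : Fin (n + 2), (-1 : ℝ) ^ (i : ℕ) * φ (fun j => x (i.succAbove j))
  map_add' φ ψ := by
    funext x
    simp [mul_add, Finset.sum_add_distrib]
  map_smul' c φ := by
    funext x
    simp only [Pi.smul_apply, smul_eq_mul, RingHom.id_apply]
    rw [Finset.mul_sum]
    exact Finset.sum_congr rfl fun i _ => by ring

lemma IsInvariant.add {n : ℕ} {φ ψ : Cochain X n} (h1 : IsInvariant G X φ)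
    (h2 : IsInvariant G X ψ) : IsInvariant G X (φ + ψ) := fun g x => by
  simp only [Pi.add_apply, h1 g x, h2 g x]

lemma IsInvariant.smul {n : ℕ} (c : ℝ) {φ : Cochain X n} (h : IsInvariant G X φ) :
    IsInvariant G X (c • φ) := fun g x => by
  simp only [Pi.smul_apply, h g x]

lemma IsInvariant.zero {n : ℕ} : IsInvariant G X (0 : Cochain X n) := fun _ _ => rfl

lemma IsBoundedC.add {n : ℕ} {φ ψ : Cochain X n} :
    IsBoundedC φ → IsBoundedC ψ → IsBoundedC (φ + ψ)
  | ⟨C, hC⟩, ⟨D, hD⟩ => ⟨C + D, fun x => (abs_add_le (φ x) (ψ x)).trans (add_le_add (hC x) (hD x))⟩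

lemma IsBoundedC.smul {n : ℕ} (c : ℝ) {φ : Cochain X n} :
    IsBoundedC φ → IsBoundedC (c • φ)
  | ⟨C, hC⟩ => ⟨|c| * C, fun x => by
      have h : |(c • φ) x| = |c| * |φ x| := by simp [abs_mul]
      rw [h]
      exact mul_le_mul_of_nonneg_left (hC x) (abs_nonneg c)⟩

lemma IsBoundedC.zero {n : ℕ} : IsBoundedC (0 : Cochain X n) :=
  ⟨0, fun x => by simp⟩

variable (G X)

/-- The bounded `G`-invariant cocycles on `X` in degree `n`. -/
noncomputable def Zb (n : ℕ) : Submodule ℝ (Cochain X n) where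
  carrier := {z | IsBoundedC z ∧ IsInvariant G X z ∧ delta z = 0}
  add_mem' := by
    rintro a b ⟨hba, hia, hda⟩ ⟨hbb, hib, hdb⟩
    exact ⟨hba.add hbb, hia.add hib, by rw [map_add, hda, hdb, add_zero]⟩
  zero_mem' := ⟨IsBoundedC.zero, IsInvariant.zero, map_zero _⟩
  smul_mem' := by
    rintro c a ⟨hb, hi, hd⟩
    exact ⟨hb.smul c, hi.smul c, by rw [map_smul, hd, smul_zero]⟩

/-- Being the coboundary of a bounded invariant cochain (with the convention `C^{-1} = 0`). -/
def IsCobdry : ∀ {n : ℕ}, Cochain X n → Prop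
  | 0, ψ => ψ = 0
  | n + 1, ψ => ∃ φ : Cochain X n, IsBoundedC φ ∧ IsInvariant G X φ ∧ delta φ = ψ

variable {G X}

lemma IsCobdry.add : ∀ {n : ℕ} {a b : Cochain X n},
    IsCobdry G X a → IsCobdry G X b → IsCobdry G X (a + b)
  | 0, a, b, ha, hb => by
      show a + b = 0
      rw [show a = 0 from ha, show b = 0 from hb, add_zero]
  | n + 1, a, b, ⟨φ, h1, h2, h3⟩, ⟨ψ, g1, g2, g3⟩ =>
      ⟨φ + ψ, h1.add g1, h2.add g2, by rw [map_add, h3, g3]⟩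

lemma IsCobdry.smul : ∀ {n : ℕ} (c : ℝ) {a : Cochain X n},
    IsCobdry G X a → IsCobdry G X (c • a)
  | 0, c, a, ha => by
      show c • a = 0
      rw [show a = 0 from ha, smul_zero]
  | n + 1, c, a, ⟨φ, h1, h2, h3⟩ => ⟨c • φ, h1.smul c, h2.smul c, by rw [map_smul, h3]⟩

lemma IsCobdry.zero : ∀ {n : ℕ}, IsCobdry G X (0 : Cochain X n)
  | 0 => rfl
  | n + 1 => ⟨0, IsBoundedC.zero, IsInvariant.zero, map_zero _⟩

variable (G X)

/-- The coboundaries, as a submodule of the cocycles. -/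
noncomputable def Bb (n : ℕ) : Submodule ℝ (Zb G X n) where
  carrier := {z | IsCobdry G X (z : Cochain X n)}
  add_mem' := by
    intro a b ha hb
    show IsCobdry G X ((a + b : Zb G X n) : Cochain X n)
    rw [Submodule.coe_add]
    exact ha.add hb
  zero_mem' := by
    show IsCobdry G X ((0 : Zb G X n) : Cochain X n)
    rw [ZeroMemClass.coe_zero]
    exact IsCobdry.zero
  smul_mem' := by
    intro c a ha
    show IsCobdry G X ((c • a : Zb G X n) : Cochain X n)
    rw [Submodule.coe_smul]
    exact ha.smul c

/-- The bounded cohomology `H^n_b(G ↷ X)` of the action of `G` on `X`. -/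
abbrev Hb (n : ℕ) := Zb G X n ⧸ Bb G X n

variable {G X}

/-- The bounded cohomology class of a bounded invariant cocycle. -/
noncomputable abbrev mkH {n : ℕ} (z : Zb G X n) : Hb G X n := (Bb G X n).mkQ z

/-- The canonical `ℓ^∞`-seminorm on bounded cohomology, in `[0,∞]`. -/
noncomputable def gnorm {n : ℕ} (α : Hb G X n) : ℝ≥0∞ :=
  sInf {r | ∃ z : Zb G X n, mkH z = α ∧ snorm (z : Cochain X n) = r}

/-- The cochain map `w_x` given by evaluation along the orbit of the basepoint `x`. -/
def wmap (x : X) {n : ℕ} (φ : Cochain X n) : Cochain G n :=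
  fun gs => φ fun i => gs i • x

lemma delta_wmap (x : X) {n : ℕ} (φ : Cochain X n) :
    delta (wmap (G := G) x φ) = wmap x (delta φ) := rfl

lemma IsBoundedC.wmap {x : X} {n : ℕ} {φ : Cochain X n} :
    IsBoundedC φ → IsBoundedC (BddCohAct.wmap (G := G) x φ)
  | ⟨C, hC⟩ => ⟨C, fun gs => hC _⟩

lemma IsInvariant.wmap {x : X} {n : ℕ} {φ : Cochain X n} (h : IsInvariant G X φ) :
    IsInvariant G G (BddCohAct.wmap x φ) := by
  intro g gs
  show φ (fun i => (g * gs i) • x) = φ (fun i => gs i • x)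
  have he : (fun i => (g * gs i) • x) = fun i => g • (gs i • x) :=
    funext fun i => mul_smul g (gs i) x
  rw [he]
  exact h g _

/-- `w_x` on bounded invariant cocycles. -/
noncomputable def wZ (x : X) (n : ℕ) : Zb G X n →ₗ[ℝ] Zb G G n where
  toFun z := ⟨wmap x (z : Cochain X n), by
    obtain ⟨hb, hi, hd⟩ := z.2
    refine ⟨hb.wmap, hi.wmap, ?_⟩
    rw [delta_wmap, hd]
    rfl⟩
  map_add' z w := Subtype.ext rfl
  map_smul' c z := Subtype.ext rfl

lemma wZ_mem_Bb (x : X) :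
    ∀ {n : ℕ} (z : Zb G X n), z ∈ Bb G X n → wZ x n z ∈ Bb G G n
  | 0, z, hz => by
      show wmap x (z : Cochain X 0) = 0
      rw [show (z : Cochain X 0) = 0 from hz]
      rfl
  | n + 1, z, ⟨φ, h1, h2, h3⟩ =>
      ⟨wmap x φ, h1.wmap, h2.wmap, by rw [delta_wmap, h3]; rfl⟩

/-- The map `H^n_b(G ↷ X) → H^n_b(G)` induced by `w_x`. -/
noncomputable def Hw (x : X) (n : ℕ) : Hb G X n →ₗ[ℝ] Hb G G n :=
  Submodule.mapQ (Bb G X n) (Bb G G n) (wZ x n) fun z hz => wZ_mem_Bb x z hz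

end BddCohAct

namespace BddCohAct

section Aux

variable {G X : Type*} [Group G] [MulAction G X]

/-! ### Clamped indexing and tuple combinatorics -/

/-- Clamped evaluation of a tuple at a natural number index. -/
def clamp {Y : Type*} {m : ℕ} (y : Fin (m + 1) → Y) (a : ℕ) : Y :=
  y ⟨min a m, Nat.lt_succ_of_le (Nat.min_le_right a m)⟩

lemma succAbove_val {m : ℕ} (i : Fin (m + 1)) (j : Fin m) :
    ((i.succAbove j : Fin (m + 1)) : ℕ) =
      if (j : ℕ) < (i : ℕ) then (j : ℕ) else (j : ℕ) + 1 := by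
  rw [Fin.succAbove]
  split_ifs with h1 h2 h3 <;> simp_all [Fin.lt_def] <;> omega

/-- The prism tuple: apply `f` to the first `k+1` coordinates, repeat the `k`-th. -/
def prism {Y : Type*} (f : Y → Y) {n : ℕ} (k : ℕ) (y : Fin (n + 1) → Y) : Fin (n + 2) → Y :=
  fun j => if (j : ℕ) ≤ k then f (clamp y (j : ℕ)) else clamp y ((j : ℕ) - 1)

/-- The prism homotopy operator. -/
noncomputable def homot (f : X → X) {n : ℕ} (φ : Cochain X (n + 1)) : Cochain X n :=
  fun y => ∑ k ∈ Finset.range (n + 1), (-1 : ℝ) ^ k * φ (prism f k y)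

/-- Normal form for the tuples appearing in `delta (homot f φ)`. -/
def TA {Y : Type*} (f : Y → Y) {n : ℕ} (y : Fin (n + 2) → Y) (i k : ℕ) : Fin (n + 2) → Y :=
  fun j => if (j : ℕ) ≤ k then
      f (clamp y (if (j : ℕ) < i then (j : ℕ) else (j : ℕ) + 1))
    else clamp y (if (j : ℕ) - 1 < i then (j : ℕ) - 1 else (j : ℕ))

/-- Normal form for the tuples appearing in `homot f (delta φ)`. -/
def TB {Y : Type*} (f : Y → Y) {n : ℕ} (y : Fin (n + 2) → Y) (k i : ℕ) : Fin (n + 2) → Y :=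
  fun j => if (if (j : ℕ) < i then (j : ℕ) else (j : ℕ) + 1) ≤ k then
      f (clamp y (if (j : ℕ) < i then (j : ℕ) else (j : ℕ) + 1))
    else clamp y ((if (j : ℕ) < i then (j : ℕ) else (j : ℕ) + 1) - 1)

/-- Diagonal tuples. -/
def Dt {Y : Type*} (f : Y → Y) {n : ℕ} (y : Fin (n + 2) → Y) (k : ℕ) : Fin (n + 2) → Y :=
  fun j => if (j : ℕ) < k then f (clamp y (j : ℕ)) else clamp y (j : ℕ)

lemma clamp_eq {Y : Type*} {m : ℕ} (y : Fin (m + 1) → Y) (j : Fin (m + 1)) :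
    clamp y (j : ℕ) = y j := by
  unfold clamp
  apply congrArg
  apply Fin.ext
  have := j.isLt
  simp only [Fin.val_mk]
  omega

lemma clamp_comp_succAbove {Y : Type*} {m : ℕ} (y : Fin (m + 2) → Y) (i : Fin (m + 2)) (a : ℕ) :
    clamp (fun j => y (i.succAbove j)) a =
      clamp y (if min a m < (i : ℕ) then min a m else min a m + 1) := by
  unfold clamp
  apply congrArg
  apply Fin.ext
  rw [succAbove_val]
  simp only [Fin.val_mk]
  split_ifs <;> omega

lemma tup_LA {Y : Type*} (f : Y → Y) {n : ℕ} (y : Fin (n + 2) → Y) (i : Fin (n + 2))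
    {k : ℕ} (hk : k < n + 1) :
    prism f k (fun j => y (i.succAbove j)) = TA f y (i : ℕ) k := by
  funext j
  have hj := j.isLt
  have hi := i.isLt
  simp only [prism, TA, clamp_comp_succAbove]
  all_goals first
    | rfl
    | (split_ifs <;>
        first
          | rfl
          | omega
          | (exfalso; omega)
          | (congr 1; omega)
          | (congr 1; congr 1; omega))

lemma tup_LB {Y : Type*} (f : Y → Y) {n : ℕ} (y : Fin (n + 2) → Y) (i : Fin (n + 3))
    {k : ℕ} (hk : k < n + 2) :
    (fun j => prism f k y (i.succAbove j)) = TB f y k (i : ℕ) := by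
  funext j
  have hj := j.isLt
  have hi := i.isLt
  have hsv := succAbove_val i j
  simp only [prism, TB, hsv]
  all_goals first
    | rfl
    | (split_ifs <;>
        first
          | rfl
          | omega
          | (exfalso; omega)
          | (congr 1; omega)
          | (congr 1; congr 1; omega))

lemma tup_diag1 {Y : Type*} (f : Y → Y) {n : ℕ} (y : Fin (n + 2) → Y) (k : ℕ) :
    TB f y k k = Dt f y k := by
  funext j
  have hj := j.isLt
  simp only [TB, Dt]
  all_goals first
    | rfl
    | (split_ifs <;>
        first
          | rfl
          | omega
          | (exfalso; omega)
          | (congr 1; omega)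
          | (congr 1; congr 1; omega))

lemma tup_diag2 {Y : Type*} (f : Y → Y) {n : ℕ} (y : Fin (n + 2) → Y) (k : ℕ) :
    TB f y k (k + 1) = Dt f y (k + 1) := by
  funext j
  have hj := j.isLt
  simp only [TB, Dt]
  all_goals first
    | rfl
    | (split_ifs <;>
        first
          | rfl
          | omega
          | (exfalso; omega)
          | (congr 1; omega)
          | (congr 1; congr 1; omega))

lemma tup_off1 {Y : Type*} (f : Y → Y) {n : ℕ} (y : Fin (n + 2) → Y) {k i : ℕ}
    (hik : i < k) (hk : k < n + 2) :
    TB f y k i = TA f y i (k - 1) := by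
  funext j
  have hj := j.isLt
  simp only [TB, TA]
  all_goals first
    | rfl
    | (split_ifs <;>
        first
          | rfl
          | omega
          | (exfalso; omega)
          | (congr 1; omega)
          | (congr 1; congr 1; omega))

lemma tup_off2 {Y : Type*} (f : Y → Y) {n : ℕ} (y : Fin (n + 2) → Y) {k i : ℕ}
    (hik : k + 1 < i) (hi : i < n + 3) :
    TB f y k i = TA f y (i - 1) k := by
  funext j
  have hj := j.isLt
  simp only [TB, TA]
  all_goals first
    | rfl
    | (split_ifs <;>
        first
          | rfl
          | omega
          | (exfalso; omega)
          | (congr 1; omega)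
          | (congr 1; congr 1; omega))

lemma tup_Dt_zero {Y : Type*} (f : Y → Y) {n : ℕ} (y : Fin (n + 2) → Y) :
    Dt f y 0 = y := by
  funext j
  simp only [Dt]
  rw [if_neg (Nat.not_lt_zero _)]
  exact clamp_eq y j

lemma tup_Dt_top {Y : Type*} (f : Y → Y) {n : ℕ} (y : Fin (n + 2) → Y) :
    Dt f y (n + 2) = fun j => f (y j) := by
  funext j
  have := j.isLt
  simp only [Dt]
  rw [if_pos this, clamp_eq]

/-! ### The homotopy identity -/

lemma delta_apply {n : ℕ} (φ : Cochain X n) (y : Fin (n + 2) → X) :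
    delta φ y = ∑ i : Fin (n + 2), (-1 : ℝ) ^ (i : ℕ) * φ (fun j => y (i.succAbove j)) := rfl

lemma key_identity (f : X → X) {n : ℕ} (φ : Cochain X (n + 1)) (y : Fin (n + 2) → X) :
    delta (homot f φ) y + homot f (delta φ) y = φ y - φ (fun j => f (y j)) := by
  classical
  -- A-side
  have hA : delta (homot f φ) y =
      ∑ i ∈ Finset.range (n + 2), ∑ k ∈ Finset.range (n + 1),
        (-1 : ℝ) ^ (i + k) * φ (TA f y i k) := by
    rw [delta_apply]
    have h1 : ∀ i : Fin (n + 2),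
        (-1 : ℝ) ^ (i : ℕ) * homot f φ (fun j => y (i.succAbove j)) =
          ∑ k ∈ Finset.range (n + 1), (-1 : ℝ) ^ ((i : ℕ) + k) * φ (TA f y (i : ℕ) k) := by
      intro i
      unfold homot
      rw [Finset.mul_sum]
      refine Finset.sum_congr rfl fun k hk => ?_
      rw [tup_LA f y i (Finset.mem_range.mp hk), pow_add]
      ring
    calc ∑ i : Fin (n + 2), (-1 : ℝ) ^ (i : ℕ) * homot f φ (fun j => y (i.succAbove j))
        = ∑ i : Fin (n + 2),
            ∑ k ∈ Finset.range (n + 1), (-1 : ℝ) ^ ((i : ℕ) + k) * φ (TA f y (i : ℕ) k) :=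
          Finset.sum_congr rfl fun i _ => h1 i
      _ = _ := Fin.sum_univ_eq_sum_range
            (fun m => ∑ k ∈ Finset.range (n + 1), (-1 : ℝ) ^ (m + k) * φ (TA f y m k)) (n + 2)
  -- B-side
  have hB : homot f (delta φ) y =
      ∑ k ∈ Finset.range (n + 2), ∑ i ∈ Finset.range (n + 3),
        (-1 : ℝ) ^ (k + i) * φ (TB f y k i) := by
    unfold homot
    refine Finset.sum_congr rfl fun k hk => ?_
    rw [delta_apply]
    rw [Finset.mul_sum]
    have h2 : ∀ i : Fin (n + 3),
        (-1 : ℝ) ^ (k : ℕ) * ((-1 : ℝ) ^ (i : ℕ) * φ (fun j => prism f k y (i.succAbove j))) =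
          (-1 : ℝ) ^ (k + (i : ℕ)) * φ (TB f y k (i : ℕ)) := by
      intro i
      rw [tup_LB f y i (Finset.mem_range.mp hk), pow_add]
      ring
    calc ∑ i : Fin (n + 3),
          (-1 : ℝ) ^ (k : ℕ) * ((-1 : ℝ) ^ (i : ℕ) * φ (fun j => prism f k y (i.succAbove j)))
        = ∑ i : Fin (n + 3), (-1 : ℝ) ^ (k + (i : ℕ)) * φ (TB f y k (i : ℕ)) :=
          Finset.sum_congr rfl fun i _ => h2 i
      _ = _ := Fin.sum_univ_eq_sum_range (fun m => (-1 : ℝ) ^ (k + m) * φ (TB f y k m)) (n + 3)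
  -- split the B-sum
  set g : ℕ → ℕ → ℝ := fun k i => (-1 : ℝ) ^ (k + i) * φ (TB f y k i) with hg
  have hsplit : ∀ k ∈ Finset.range (n + 2),
      ∑ i ∈ Finset.range (n + 3), g k i =
        (φ (Dt f y k) - φ (Dt f y (k + 1))) +
          ∑ i ∈ ((Finset.range (n + 3)).erase k).erase (k + 1), g k i := by
    intro k hk
    have hk' := Finset.mem_range.mp hk
    have hmem1 : k ∈ Finset.range (n + 3) := Finset.mem_range.mpr (by omega)
    have hmem2 : k + 1 ∈ (Finset.range (n + 3)).erase k := by
      rw [Finset.mem_erase]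
      exact ⟨by omega, Finset.mem_range.mpr (by omega)⟩
    rw [← Finset.add_sum_erase _ _ hmem1, ← Finset.add_sum_erase _ _ hmem2, ← add_assoc]
    congr 1
    have e1 : g k k = φ (Dt f y k) := by
      rw [hg]; simp only
      rw [tup_diag1, Even.neg_one_pow ⟨k, rfl⟩, one_mul]
    have e2 : g k (k + 1) = -φ (Dt f y (k + 1)) := by
      rw [hg]; simp only
      rw [tup_diag2, Odd.neg_one_pow ⟨k, by ring⟩]
      ring
    rw [e1, e2]; ring
  have hB2 : homot f (delta φ) y =
      (φ y - φ (fun j => f (y j))) +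
        ∑ k ∈ Finset.range (n + 2),
          ∑ i ∈ ((Finset.range (n + 3)).erase k).erase (k + 1), g k i := by
    rw [hB]
    rw [Finset.sum_congr rfl hsplit, Finset.sum_add_distrib]
    congr 1
    rw [Finset.sum_range_sub' (fun k => φ (Dt f y k)) (n + 2), tup_Dt_zero, tup_Dt_top]
  -- the off-diagonal part cancels the A-sum
  have hcancel :
      ∑ k ∈ Finset.range (n + 2),
          ∑ i ∈ ((Finset.range (n + 3)).erase k).erase (k + 1), g k i =
        -∑ i ∈ Finset.range (n + 2), ∑ k ∈ Finset.range (n + 1),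
          (-1 : ℝ) ^ (i + k) * φ (TA f y i k) := by
    rw [Finset.sum_sigma', Finset.sum_sigma', ← Finset.sum_neg_distrib]
    refine Finset.sum_nbij'
      (fun p => if p.2 < p.1 then ⟨p.2, p.1 - 1⟩ else ⟨p.2 - 1, p.1⟩)
      (fun q => if q.1 ≤ q.2 then ⟨q.2 + 1, q.1⟩ else ⟨q.2, q.1 + 1⟩) ?_ ?_ ?_ ?_ ?_
    · rintro ⟨k, i⟩ hp
      simp only [Finset.mem_sigma, Finset.mem_erase, Finset.mem_range] at hp
      by_cases h : i < k
      · simp only [h, if_true, Finset.mem_sigma, Finset.mem_erase, Finset.mem_range]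
        omega
      · simp only [h, if_false, Finset.mem_sigma, Finset.mem_erase, Finset.mem_range]
        omega
    · rintro ⟨i, k⟩ hq
      simp only [Finset.mem_sigma, Finset.mem_erase, Finset.mem_range] at hq
      by_cases h : i ≤ k
      · simp only [h, if_true, Finset.mem_sigma, Finset.mem_erase, Finset.mem_range]
        omega
      · simp only [h, if_false, Finset.mem_sigma, Finset.mem_erase, Finset.mem_range]
        omega
    · rintro ⟨k, i⟩ hp
      simp only [Finset.mem_sigma, Finset.mem_erase, Finset.mem_range] at hp
      dsimp only
      by_cases h : i < k
      · rw [if_pos h]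
        dsimp only
        rw [if_pos (show i ≤ k - 1 by omega)]
        simp only [Sigma.mk.inj_iff, heq_eq_eq, eq_self_iff_true, and_true, true_and]
        all_goals omega
      · rw [if_neg h]
        dsimp only
        rw [if_neg (show ¬ (i - 1 ≤ k) by omega)]
        simp only [Sigma.mk.inj_iff, heq_eq_eq, eq_self_iff_true, and_true, true_and]
        all_goals omega
    · rintro ⟨i, k⟩ hq
      simp only [Finset.mem_sigma, Finset.mem_erase, Finset.mem_range] at hq
      dsimp only
      by_cases h : i ≤ k
      · rw [if_pos h]
        dsimp only
        rw [if_pos (show i < k + 1 by omega)]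
        simp only [Sigma.mk.inj_iff, heq_eq_eq, eq_self_iff_true, and_true, true_and]
        all_goals omega
      · rw [if_neg h]
        dsimp only
        rw [if_neg (show ¬ (i + 1 < k) by omega)]
        simp only [Sigma.mk.inj_iff, heq_eq_eq, eq_self_iff_true, and_true, true_and]
        all_goals omega
    · rintro ⟨k, i⟩ hp
      simp only [Finset.mem_sigma, Finset.mem_erase, Finset.mem_range] at hp
      obtain ⟨hk, hi1, hi2, hi3⟩ := hp
      by_cases hik : i < k
      · simp only [hik, if_true, hg]
        rw [tup_off1 f y hik hk]
        have hkk : k + i = (i + (k - 1)) + 1 := by omega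
        rw [hkk, pow_succ]
        ring
      · simp only [hik, if_false, hg]
        have hik2 : k + 1 < i := by omega
        rw [tup_off2 f y hik2 hi3]
        have hkk : k + i = ((i - 1) + k) + 1 := by omega
        rw [hkk, pow_succ]
        ring
  rw [hA, hB2, hcancel]
  ring

/-! ### Properties of the homotopy operator -/

lemma homot_zero (f : X → X) {n : ℕ} (y : Fin (n + 1) → X) :
    homot f (0 : Cochain X (n + 1)) y = 0 := by
  simp [homot]

lemma IsBoundedC.homot {f : X → X} {n : ℕ} {φ : Cochain X (n + 1)} :
    IsBoundedC φ → IsBoundedC (BddCohAct.homot f φ)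
  | ⟨C, hC⟩ => by
      refine ⟨(n + 1) * C, fun y => ?_⟩
      calc |BddCohAct.homot f φ y| ≤ ∑ k ∈ Finset.range (n + 1), |(-1 : ℝ) ^ k * φ (prism f k y)| :=
            Finset.abs_sum_le_sum_abs _ _
        _ ≤ ∑ k ∈ Finset.range (n + 1), C := by
            refine Finset.sum_le_sum fun k _ => ?_
            rw [abs_mul, abs_pow, abs_neg, abs_one, one_pow, one_mul]
            exact hC _
        _ = (n + 1) * C := by
            rw [Finset.sum_const, Finset.card_range, nsmul_eq_mul]
            push_cast
            ring

lemma prism_smul {f : X → X} (hf : ∀ (g : G) (z : X), f (g • z) = g • f z) {n : ℕ}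
    (k : ℕ) (y : Fin (n + 1) → X) (g : G) :
    prism f k (fun i => g • y i) = fun j => g • prism f k y j := by
  funext j
  simp only [prism, clamp]
  split_ifs
  · exact hf g _
  · rfl

lemma IsInvariant.homot {f : X → X} (hf : ∀ (g : G) (z : X), f (g • z) = g • f z) {n : ℕ}
    {φ : Cochain X (n + 1)} (h : IsInvariant G X φ) :
    IsInvariant G X (BddCohAct.homot f φ) := by
  intro g y
  unfold BddCohAct.homot
  refine Finset.sum_congr rfl fun k _ => ?_
  rw [prism_smul hf k y g, h g]

/-! ### The extension map -/

/-- The extension of a cochain on `G` to a cochain on `X` along `p : X → G`. -/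
def emap (p : X → G) {n : ℕ} (ψ : Cochain G n) : Cochain X n :=
  fun y => ψ (fun i => p (y i))

lemma delta_emap (p : X → G) {n : ℕ} (ψ : Cochain G n) :
    delta (emap p ψ) = emap p (delta ψ) := rfl

lemma emap_sub (p : X → G) {n : ℕ} (ψ₁ ψ₂ : Cochain G n) :
    emap p (ψ₁ - ψ₂) = emap p ψ₁ - emap p ψ₂ := rfl

lemma IsBoundedC.emap {p : X → G} {n : ℕ} {ψ : Cochain G n} :
    IsBoundedC ψ → IsBoundedC (BddCohAct.emap p ψ)
  | ⟨C, hC⟩ => ⟨C, fun y => hC _⟩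

lemma IsInvariant.emap {p : X → G} (hp : ∀ (g : G) (y : X), p (g • y) = g * p y) {n : ℕ}
    {ψ : Cochain G n} (h : IsInvariant G G ψ) :
    IsInvariant G X (BddCohAct.emap p ψ) := by
  intro g y
  show ψ (fun i => p (g • y i)) = ψ (fun i => p (y i))
  have : (fun i => p (g • y i)) = fun i => g • p (y i) := by
    funext i; rw [hp g (y i), smul_eq_mul]
  rw [this]
  exact h g _

lemma snorm_emap_le (p : X → G) {n : ℕ} (ψ : Cochain G n) :
    snorm (emap p ψ) ≤ snorm ψ :=
  iSup_le fun y => le_iSup_of_le (fun i => p (y i)) le_rfl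

lemma snorm_wmap_le (x : X) {n : ℕ} (φ : Cochain X n) :
    snorm (wmap (G := G) x φ) ≤ snorm φ :=
  iSup_le fun gs => le_iSup_of_le (fun i => gs i • x) le_rfl

/-! ### Degree-zero cocycles are constant -/

lemma cocycle_zero_constant {z : Cochain X 0} (hz : delta z = 0) (u v : Fin 1 → X) :
    z u = z v := by
  have h0 : delta z (fun j : Fin 2 => if (j : ℕ) = 0 then u 0 else v 0) = 0 := by
    rw [hz]; rfl
  rw [delta_apply] at h0
  rw [Fin.sum_univ_two] at h0
  have e0 : (fun j : Fin 1 =>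
      (fun j : Fin 2 => if (j : ℕ) = 0 then u 0 else v 0) ((0 : Fin 2).succAbove j)) = v := by
    funext j
    have : j = 0 := Subsingleton.elim j 0
    subst this
    rfl
  have e1 : (fun j : Fin 1 =>
      (fun j : Fin 2 => if (j : ℕ) = 0 then u 0 else v 0) ((1 : Fin 2).succAbove j)) = u := by
    funext j
    have : j = 0 := Subsingleton.elim j 0
    subst this
    have : (fun i : Fin 1 => u 0) = u := by
      funext i
      have : i = 0 := Subsingleton.elim i 0
      rw [this]
    calc (if (((1 : Fin 2).succAbove 0 : Fin 2) : ℕ) = 0 then u 0 else v 0) = u 0 := by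
          norm_num [succAbove_val]
      _ = u 0 := rfl
  rw [e0, e1] at h0
  simp only [Fin.val_zero, Fin.val_one, pow_zero, pow_one, one_mul, neg_one_mul] at h0
  linarith

end Aux

/-! ### The equivariant retraction coming from a free action -/

section Free

variable (G : Type*) {X : Type*} [Group G] [MulAction G X]

open Classical in
/-- A choice of orbit representatives, with the orbit of `x` represented by `x`. -/
noncomputable def orbRep (x y : X) : X :=
  if MulAction.orbitRel G X y x then x
  else (Quotient.mk (MulAction.orbitRel G X) y).out

lemma orbRep_exists (x y : X) : ∃ g : G, g • orbRep G x y = y := by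
  unfold orbRep
  split_ifs with h
  · rw [MulAction.orbitRel_apply, MulAction.mem_orbit_iff] at h
    obtain ⟨g, hg⟩ := h
    exact ⟨g, hg⟩
  · have h2 : MulAction.orbitRel G X (Quotient.mk (MulAction.orbitRel G X) y).out y :=
      Quotient.exact (Quotient.out_eq _)
    rw [MulAction.orbitRel_apply, MulAction.mem_orbit_iff] at h2
    obtain ⟨g, hg⟩ := h2
    exact ⟨g⁻¹, by rw [← hg, inv_smul_smul]⟩

lemma orbRep_smul (x : X) (g : G) (y : X) : orbRep G x (g • y) = orbRep G x y := by
  unfold orbRep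
  have hrel : MulAction.orbitRel G X (g • y) y := by
    rw [MulAction.orbitRel_apply]
    exact MulAction.mem_orbit y g
  have h1 : MulAction.orbitRel G X (g • y) x ↔ MulAction.orbitRel G X y x :=
    ⟨fun h => (MulAction.orbitRel G X).trans ((MulAction.orbitRel G X).symm hrel) h,
     fun h => (MulAction.orbitRel G X).trans hrel h⟩
  have h2 : Quotient.mk (MulAction.orbitRel G X) (g • y) =
      Quotient.mk (MulAction.orbitRel G X) y := Quotient.sound hrel
  split_ifs with ha hb hb
  · rfl
  · exact absurd (h1.mp ha) hb
  · exact absurd (h1.mpr hb) ha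
  · rw [h2]

lemma orbRep_self (x : X) : orbRep G x x = x := by
  unfold orbRep
  split_ifs with h
  · rfl
  · exact absurd ((MulAction.orbitRel G X).iseqv.refl x) h

/-- The equivariant "coordinate" map `X → G` determined by the orbit representatives. -/
noncomputable def pmap (x y : X) : G := (orbRep_exists G x y).choose

lemma pmap_spec (x y : X) : pmap G x y • orbRep G x y = y := (orbRep_exists G x y).choose_spec

variable {G}

lemma smul_cancel_of_free (hfree : ∀ (g : G) (x : X), g • x = x → g = 1)
    {g₁ g₂ : G} {z : X} (h : g₁ • z = g₂ • z) : g₁ = g₂ := by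
  have h2 : (g₂⁻¹ * g₁) • z = z := by rw [mul_smul, h, inv_smul_smul]
  have h3 := hfree _ _ h2
  have : g₂ * (g₂⁻¹ * g₁) = g₂ * 1 := by rw [h3]
  rwa [← mul_assoc, mul_inv_cancel, one_mul, mul_one] at this

lemma pmap_mul (hfree : ∀ (g : G) (x : X), g • x = x → g = 1) (x : X) (g : G) (y : X) :
    pmap G x (g • y) = g * pmap G x y := by
  apply smul_cancel_of_free hfree (z := orbRep G x y)
  have h1 := pmap_spec G x (g • y)
  rw [orbRep_smul G x g y] at h1
  rw [h1, mul_smul, pmap_spec G x y]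

lemma pmap_self (hfree : ∀ (g : G) (x : X), g • x = x → g = 1) (x : X) :
    pmap G x x = 1 := by
  apply hfree
  have := pmap_spec G x x
  rwa [orbRep_self G x] at this

lemma pmap_basept (hfree : ∀ (g : G) (x : X), g • x = x → g = 1) (x : X) (g : G) :
    pmap G x (g • x) = g := by
  rw [pmap_mul hfree, pmap_self hfree, mul_one]

end Free

/-! ### The cohomological consequences -/

section Main

variable {G X : Type*} [Group G] [MulAction G X]
variable (hfree : ∀ (g : G) (x : X), g • x = x → g = 1) (x : X)

include hfree

lemma wmap_emap {n : ℕ} (ψ : Cochain G n) :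
    wmap x (emap (pmap G x) ψ) = ψ := by
  funext gs
  show ψ (fun i => pmap G x (gs i • x)) = ψ gs
  congr 1
  funext i
  rw [pmap_basept hfree]

lemma emap_wmap {n : ℕ} (φ : Cochain X n) :
    emap (pmap G x) (wmap x φ) = fun y => φ (fun j => pmap G x (y j) • x) := rfl

lemma cobdry_emap : ∀ {n : ℕ} {ψ : Cochain G n},
    IsCobdry G G ψ → IsCobdry G X (emap (pmap G x) ψ)
  | 0, ψ, h => by
      show emap (pmap G x) ψ = 0
      rw [show ψ = 0 from h]
      rfl
  | n + 1, ψ, ⟨φ, h1, h2, h3⟩ =>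
      ⟨emap (pmap G x) φ, h1.emap,
        h2.emap (fun g y => pmap_mul hfree x g y),
        by rw [delta_emap, h3]⟩

lemma IsCobdry.neg' {n : ℕ} {a : Cochain X n} (h : IsCobdry G X a) : IsCobdry G X (-a) := by
  have := h.smul (-1)
  rwa [neg_one_smul] at this

/-- A bounded invariant cocycle differs from its "discretization" by a coboundary. -/
lemma sub_emap_wmap_cobdry : ∀ {n : ℕ} (z : Cochain X n), IsBoundedC z → IsInvariant G X z →
    delta z = 0 → IsCobdry G X (z - emap (pmap G x) (wmap x z))
  | 0, z, hb, hi, hd => by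
      show z - emap (pmap G x) (wmap x z) = 0
      funext y
      have := cocycle_zero_constant hd y (fun i => pmap G x (y i) • x)
      simp only [Pi.sub_apply, Pi.zero_apply]
      rw [sub_eq_zero]
      exact this
  | n + 1, z, hb, hi, hd => by
      have hf : ∀ (g : G) (w : X), (fun y => pmap G x y • x) (g • w) =
          g • (fun y => pmap G x y • x) w := by
        intro g w
        simp only
        rw [pmap_mul hfree, mul_smul]
      refine ⟨homot (fun y => pmap G x y • x) z, hb.homot, hi.homot hf, ?_⟩
      funext y
      have hk := key_identity (fun y => pmap G x y • x) z y
      rw [hd] at hk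
      rw [homot_zero] at hk
      have : emap (pmap G x) (wmap x z) y = z (fun j => pmap G x (y j) • x) := rfl
      simp only [Pi.sub_apply]
      rw [this]
      linarith

end Main

end BddCohAct



open BddCohAct

/-- If a group `Γ` acts freely on a set `X`, then for every basepoint `x ∈ X` the map induced
by `w_x` is an isometric isomorphism from `H^n_b(Γ ↷ X)` onto `H^n_b(Γ)` (the latter being the
bounded cohomology of the action of `Γ` on itself by left translations). -/
theorem Hw_bijective_isometric (Γ : Type*) (X : Type*) [Group Γ] [MulAction Γ X]
    (hfree : ∀ (g : Γ) (x : X), g • x = x → g = 1)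
    (n : ℕ) (x : X) :
    Function.Bijective (Hw x n : Hb Γ X n →ₗ[ℝ] Hb Γ Γ n) ∧
      ∀ α : Hb Γ X n, gnorm (Hw x n α) = gnorm α := by
  classical
  set p : X → Γ := pmap Γ x with hpdef
  -- extension of a bounded invariant cocycle on Γ to one on X
  have hzmem : ∀ ζ : Zb Γ Γ n, emap p ζ.val ∈ Zb Γ X n := by
    intro ζ
    obtain ⟨hb, hi, hd⟩ := ζ.2
    refine ⟨hb.emap, hi.emap (fun g y => pmap_mul hfree x g y), ?_⟩
    rw [delta_emap, hd]
    rfl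
  have hwe : ∀ ζ : Zb Γ Γ n, wZ x n ⟨emap p ζ.val, hzmem ζ⟩ = ζ := fun ζ =>
    Subtype.ext (wmap_emap hfree x ζ.val)
  have hkey : ∀ z : Zb Γ X n, IsCobdry Γ X (z.val - emap p (wmap x z.val)) := fun z =>
    sub_emap_wmap_cobdry hfree x z.val z.2.1 z.2.2.1 z.2.2.2
  have hHw : ∀ w : Zb Γ X n, Hw x n (mkH w) = mkH (wZ x n w) := fun w =>
    Submodule.mapQ_apply _ _ _ w
  have hsurj : Function.Surjective (Hw x n : Hb Γ X n →ₗ[ℝ] Hb Γ Γ n) := by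
    intro β
    obtain ⟨ζ, rfl⟩ := (Bb Γ Γ n).mkQ_surjective β
    refine ⟨mkH ⟨emap p ζ.val, hzmem ζ⟩, ?_⟩
    rw [hHw, hwe ζ]
  have hinj : Function.Injective (Hw x n : Hb Γ X n →ₗ[ℝ] Hb Γ Γ n) := by
    rw [injective_iff_map_eq_zero]
    intro α hα
    obtain ⟨z, rfl⟩ := (Bb Γ X n).mkQ_surjective α
    rw [hHw] at hα
    have hα' : IsCobdry Γ Γ (wmap x z.val) :=
      (Submodule.Quotient.mk_eq_zero (Bb Γ Γ n)).mp hα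
    have h1 : IsCobdry Γ X (emap p (wmap x z.val)) := cobdry_emap hfree x hα'
    have h2 := (hkey z).add h1
    have h3 : z.val - emap p (wmap x z.val) + emap p (wmap x z.val) = z.val := by abel
    rw [h3] at h2
    exact (Submodule.Quotient.mk_eq_zero (Bb Γ X n)).mpr h2
  refine ⟨⟨hinj, hsurj⟩, ?_⟩
  intro α
  obtain ⟨z, rfl⟩ := (Bb Γ X n).mkQ_surjective α
  apply le_antisymm
  · apply le_sInf
    rintro r ⟨w, hw, rfl⟩
    refine le_trans (sInf_le ⟨wZ x n w, ?_, rfl⟩) (snorm_wmap_le x (w.val))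
    rw [← hw]
    exact (hHw w).symm
  · apply le_sInf
    rintro r ⟨ζ, hζ, rfl⟩
    refine le_trans (sInf_le ⟨⟨emap p ζ.val, hzmem ζ⟩, ?_, rfl⟩) (snorm_emap_le p ζ.val)
    rw [hHw] at hζ
    have hζ' : IsCobdry Γ Γ (ζ.val - wmap x z.val) :=
      (Submodule.Quotient.eq (Bb Γ Γ n)).mp hζ
    have h1 : IsCobdry Γ X (emap p (ζ.val - wmap x z.val)) := cobdry_emap hfree x hζ'
    rw [emap_sub] at h1
    have h2 := (hkey z).neg' hfree
    rw [neg_sub] at h2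
    have h3 := h1.add h2
    have h4 : emap p ζ.val - emap p (wmap x z.val) + (emap p (wmap x z.val) - z.val) =
        emap p ζ.val - z.val := by abel
    rw [h4] at h3
    exact (Submodule.Quotient.eq (Bb Γ X n)).mpr h3
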